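/- Let V, E be real reflexive Banach spaces, Λ ⊆ E nonempty closed convex, X a Banach space, γ : V → X linear bounded, J : X → ℝ locally Lipschitz, b : V × E → ℝ bilinear bounded, A : V → V*, f ∈ V*, and h : V → ℝ with h(0)=0 and h(v) > 0 for all v ≠ 0. Assume u ↦ A(u) + γ*∂J(γu) is h-relaxed monotone. If (u₁,λ₁), (u₂,λ₂) ∈ V × Λ both satisfy ⟨A(uᵢ), v-uᵢ⟩ + b(v-uᵢ, λᵢ) + J⁰(γuᵢ; γv - γuᵢ) ≥ ⟨f, v-uᵢ⟩ for all v ∈ V and b(uᵢ, ρ-λᵢ) ≤ 0 for all ρ ∈ Λ, then u₁ = u₂. -/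

import Mathlib

open Filter Topology

/-- Clarke generalized directional derivative of `J` at `u` in direction `v`. -/
noncomputable def clarkeDeriv {V : Type*} [NormedAddCommGroup V] [NormedSpace ℝ V]
    (J : V → ℝ) (u v : V) : ℝ :=
  Filter.limsup (fun p : V × ℝ => (J (p.1 + p.2 • v) - J p.1) / p.2)
    ((𝓝 u) ×ˢ (𝓝[>] (0 : ℝ)))

/-- Clarke generalized gradient of `J` at `u`. -/
def clarkeGrad {V : Type*} [NormedAddCommGroup V] [NormedSpace ℝ V]
    (J : V → ℝ) (u : V) : Set (V →L[ℝ] ℝ) :=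
  {ξ | ∀ w, ξ w ≤ clarkeDeriv J u w}

section ClarkeAux

variable {X : Type*} [NormedAddCommGroup X] [NormedSpace ℝ X]

/-- The difference quotient appearing in the Clarke derivative. -/
noncomputable def cQ (J : X → ℝ) (v : X) : X × ℝ → ℝ :=
  fun p => (J (p.1 + p.2 • v) - J p.1) / p.2

lemma clarkeDeriv_eq_limsup (J : X → ℝ) (x v : X) :
    clarkeDeriv J x v = Filter.limsup (cQ J v) ((𝓝 x) ×ˢ (𝓝[>] (0 : ℝ))) := rfl

lemma cF_neBot (x : X) : ((𝓝 x) ×ˢ (𝓝[>] (0 : ℝ))).NeBot := by infer_instance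

/-- Uniform eventual bound on the difference quotients, from local Lipschitzness. -/
lemma exists_eventual_bound {J : X → ℝ} (hJ : LocallyLipschitz J) (x : X) :
    ∃ K : ℝ, 0 ≤ K ∧ ∀ v : X, ∀ᶠ p in (𝓝 x) ×ˢ (𝓝[>] (0 : ℝ)), |cQ J v p| ≤ K * ‖v‖ := by
  obtain ⟨K, t, ht, hK⟩ := hJ x
  obtain ⟨ε, hε, hball⟩ := Metric.mem_nhds_iff.1 ht
  refine ⟨K, K.coe_nonneg, fun v => ?_⟩
  set δ : ℝ := ε / 2 / (‖v‖ + 1) with hδdef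
  have hv1 : (0:ℝ) < ‖v‖ + 1 := by positivity
  have hδ : 0 < δ := by positivity
  have hδv : δ * (‖v‖ + 1) = ε / 2 := div_mul_cancel₀ _ (ne_of_gt hv1)
  refine Filter.mem_of_superset
    (Filter.prod_mem_prod (Metric.ball_mem_nhds x (by linarith : (0:ℝ) < ε/2))
      (Ioo_mem_nhdsGT_of_mem ⟨le_refl (0:ℝ), hδ⟩)) ?_
  rintro ⟨y, s⟩ ⟨hy, hs⟩
  simp only [Set.mem_setOf_eq]
  have hs0 : 0 < s := hs.1
  have hy' : y ∈ t := by
    apply hball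
    exact Metric.ball_subset_ball (by linarith) hy
  have hyv : y + s • v ∈ t := by
    apply hball
    have h1 : ‖y + s • v - x‖ ≤ ‖y - x‖ + ‖s • v‖ := by
      have : y + s • v - x = (y - x) + s • v := by abel
      rw [this]; exact norm_add_le _ _
    have h2 : ‖s • v‖ = s * ‖v‖ := by
      rw [norm_smul, Real.norm_eq_abs, abs_of_pos hs0]
    have h3 : s * ‖v‖ < δ * (‖v‖ + 1) := by
      have hvnn : (0:ℝ) ≤ ‖v‖ := norm_nonneg v
      nlinarith [hs.2]
    have hyx : ‖y - x‖ < ε / 2 := by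
      have := mem_ball_iff_norm.1 hy; exact this
    rw [Metric.mem_ball, dist_eq_norm]
    calc ‖y + s • v - x‖ ≤ ‖y - x‖ + ‖s • v‖ := h1
      _ < ε / 2 + δ * (‖v‖ + 1) := by rw [h2]; linarith
      _ = ε := by rw [hδv]; ring
  have hdist : |J (y + s • v) - J y| ≤ K * (s * ‖v‖) := by
    have := hK.dist_le_mul _ hyv _ hy'
    rw [Real.dist_eq] at this
    calc |J (y + s • v) - J y| ≤ K * dist (y + s • v) y := this
      _ = K * (s * ‖v‖) := by
        rw [dist_eq_norm, add_sub_cancel_left, norm_smul, Real.norm_eq_abs,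
          abs_of_pos hs0]
  show |(J (y + s • v) - J y) / s| ≤ K * ‖v‖
  rw [abs_div, abs_of_pos hs0, div_le_iff₀ hs0]
  calc |J (y + s • v) - J y| ≤ K * (s * ‖v‖) := hdist
    _ = K * ‖v‖ * s := by ring

lemma cQ_boundedUnder {J : X → ℝ} {x : X} {v : X} {B : ℝ}
    (hB : ∀ᶠ p in (𝓝 x) ×ˢ (𝓝[>] (0 : ℝ)), |cQ J v p| ≤ B) :
    Filter.IsBoundedUnder (· ≤ ·) ((𝓝 x) ×ˢ (𝓝[>] (0 : ℝ))) (cQ J v) :=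
  ⟨B, Filter.eventually_map.2 (hB.mono fun _ h => (abs_le.1 h).2)⟩

lemma cQ_coboundedUnder {J : X → ℝ} {x : X} {v : X} {B : ℝ}
    (hB : ∀ᶠ p in (𝓝 x) ×ˢ (𝓝[>] (0 : ℝ)), |cQ J v p| ≤ B) :
    Filter.IsCoboundedUnder (· ≤ ·) ((𝓝 x) ×ˢ (𝓝[>] (0 : ℝ))) (cQ J v) :=
  Filter.isCoboundedUnder_le_of_eventually_le _ (hB.mono fun _ h => (abs_le.1 h).1)

lemma clarkeDeriv_le_bound {J : X → ℝ} {x : X} {v : X} {B : ℝ}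
    (hB : ∀ᶠ p in (𝓝 x) ×ˢ (𝓝[>] (0 : ℝ)), |cQ J v p| ≤ B) :
    clarkeDeriv J x v ≤ B := by
  rw [clarkeDeriv_eq_limsup]
  exact Filter.limsup_le_of_le (cQ_coboundedUnder hB)
    (hB.mono fun _ h => (abs_le.1 h).2)

lemma clarkeDeriv_zero {J : X → ℝ} (x : X) : clarkeDeriv J x 0 = 0 := by
  rw [clarkeDeriv_eq_limsup]
  have : cQ J (0 : X) = fun _ => (0:ℝ) := by
    funext p; simp [cQ]
  rw [this]
  exact Filter.limsup_const 0

/-- The map `(y, t) ↦ (y + t • w, t)` tends to the Clarke filter. -/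
lemma tendsto_shift {x : X} (w : X) :
    Filter.Tendsto (fun p : X × ℝ => (p.1 + p.2 • w, p.2))
      ((𝓝 x) ×ˢ (𝓝[>] (0 : ℝ))) ((𝓝 x) ×ˢ (𝓝[>] (0 : ℝ))) := by
  apply Filter.Tendsto.prodMk
  · have h1 : Filter.Tendsto (fun p : X × ℝ => p.1) ((𝓝 x) ×ˢ (𝓝[>] (0 : ℝ))) (𝓝 x) :=
      Filter.tendsto_fst
    have h2 : Filter.Tendsto (fun p : X × ℝ => p.2 • w) ((𝓝 x) ×ˢ (𝓝[>] (0 : ℝ)))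
        (𝓝 ((0:ℝ) • w)) := by
      apply Filter.Tendsto.smul_const
      exact Filter.tendsto_snd.mono_right nhdsWithin_le_nhds
    have := h1.add h2
    simpa using this
  · exact Filter.tendsto_snd

/-- Subadditivity of the Clarke derivative. -/
lemma clarkeDeriv_add_le {J : X → ℝ} (hJ : LocallyLipschitz J) (x v w : X) :
    clarkeDeriv J x (v + w) ≤ clarkeDeriv J x v + clarkeDeriv J x w := by
  obtain ⟨K, hK0, hK⟩ := exists_eventual_bound hJ x
  set F := (𝓝 x) ×ˢ (𝓝[>] (0 : ℝ)) with hF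
  set m : X × ℝ → X × ℝ := fun p => (p.1 + p.2 • w, p.2) with hm
  have htm : Filter.Tendsto m F F := tendsto_shift w
  -- decomposition of the quotient
  have hdecomp : ∀ᶠ p in F, cQ J (v + w) p = cQ J v (m p) + cQ J w p := by
    have : ∀ᶠ p in F, (0:ℝ) < p.2 := by
      apply Filter.eventually_prod_iff.2
      exact ⟨fun _ => True, Filter.Eventually.of_forall fun _ => trivial,
        fun t => 0 < t, self_mem_nhdsWithin, fun _ _ h => h⟩
    filter_upwards [this] with p hp
    have hne : p.2 ≠ 0 := ne_of_gt hp
    simp only [cQ, hm]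
    rw [← add_div]
    congr 1
    have : p.1 + p.2 • (v + w) = p.1 + p.2 • w + p.2 • v := by
      rw [smul_add]; abel
    rw [this]; ring
  -- now the limsup estimate
  by_contra hcon
  push_neg at hcon
  set ε : ℝ := (clarkeDeriv J x (v + w) - (clarkeDeriv J x v + clarkeDeriv J x w)) / 2
    with hε
  have hεpos : 0 < ε := by simp only [hε]; linarith
  have hbv : Filter.IsBoundedUnder (· ≤ ·) F (cQ J v) := cQ_boundedUnder (hK v)
  have hbw : Filter.IsBoundedUnder (· ≤ ·) F (cQ J w) := cQ_boundedUnder (hK w)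
  have h1 : ∀ᶠ p in F, cQ J v p < clarkeDeriv J x v + ε/2 := by
    apply Filter.eventually_lt_of_limsup_lt _ hbv
    rw [← clarkeDeriv_eq_limsup]; linarith
  have h2 : ∀ᶠ p in F, cQ J w p < clarkeDeriv J x w + ε/2 := by
    apply Filter.eventually_lt_of_limsup_lt _ hbw
    rw [← clarkeDeriv_eq_limsup]; linarith
  have h1' : ∀ᶠ p in F, cQ J v (m p) < clarkeDeriv J x v + ε/2 := htm.eventually h1
  have hle : ∀ᶠ p in F, cQ J (v + w) p ≤
      clarkeDeriv J x v + clarkeDeriv J x w + ε := by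
    filter_upwards [hdecomp, h1', h2] with p hd ha hb
    rw [hd]; linarith
  have := Filter.limsup_le_of_le (cQ_coboundedUnder (hK (v + w))) hle
  rw [← clarkeDeriv_eq_limsup] at this
  simp only [hε] at this
  linarith

/-- Positive homogeneity of the Clarke derivative. -/
lemma clarkeDeriv_smul {J : X → ℝ} (hJ : LocallyLipschitz J) (x : X) {c : ℝ}
    (hc : 0 < c) (v : X) :
    clarkeDeriv J x (c • v) = c * clarkeDeriv J x v := by
  obtain ⟨K, hK0, hK⟩ := exists_eventual_bound hJ x
  set F := (𝓝 x) ×ˢ (𝓝[>] (0 : ℝ)) with hF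
  set m : X × ℝ → X × ℝ := fun p => (p.1, c * p.2) with hm
  set m' : X × ℝ → X × ℝ := fun p => (p.1, c⁻¹ * p.2) with hm'
  have hmul : ∀ d : ℝ, 0 < d → Filter.Tendsto (fun p : X × ℝ => (p.1, d * p.2)) F F := by
    intro d hd
    apply Filter.Tendsto.prodMk Filter.tendsto_fst
    have h1 : Filter.Tendsto (fun t : ℝ => d * t) (𝓝 (0:ℝ)) (𝓝 (0:ℝ)) := by
      have : Filter.Tendsto (fun t : ℝ => d * t) (𝓝 (0:ℝ)) (𝓝 (d * 0)) :=
        (continuous_const.mul continuous_id).tendsto (0:ℝ)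
      simpa using this
    have h2 : Filter.Tendsto (fun t : ℝ => d * t) (Filter.principal (Set.Ioi (0:ℝ)))
        (Filter.principal (Set.Ioi (0:ℝ))) :=
      Filter.tendsto_principal_principal.2 fun t ht => Set.mem_Ioi.2 (mul_pos hd ht)
    have : Filter.Tendsto (fun t : ℝ => d * t) (𝓝[>] (0:ℝ)) (𝓝[>] (0:ℝ)) := h1.inf h2
    exact this.comp Filter.tendsto_snd
  have htm : Filter.Tendsto m F F := hmul c hc
  have htm' : Filter.Tendsto m' F F := hmul c⁻¹ (inv_pos.2 hc)
  have hmapF : Filter.map m F = F := by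
    apply le_antisymm htm
    have hcomp : m ∘ m' = id := by
      funext p; simp only [hm, hm', Function.comp, id]
      rw [← mul_assoc, mul_inv_cancel₀ (ne_of_gt hc), one_mul]
    calc F = Filter.map (m ∘ m') F := by rw [hcomp, Filter.map_id]
      _ = Filter.map m (Filter.map m' F) := by rw [Filter.map_map]
      _ ≤ Filter.map m F := Filter.map_mono htm'
  -- the relevant pointwise identity
  have hfun : ∀ᶠ p in F, cQ J (c • v) p = c * cQ J v (m p) := by
    have hpos : ∀ᶠ p in F, (0:ℝ) < p.2 := by
      apply Filter.eventually_prod_iff.2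
      exact ⟨fun _ => True, Filter.Eventually.of_forall fun _ => trivial,
        fun t => 0 < t, self_mem_nhdsWithin, fun _ _ h => h⟩
    filter_upwards [hpos] with p hp
    simp only [cQ, hm]
    have h1 : p.1 + p.2 • (c • v) = p.1 + (c * p.2) • v := by
      rw [smul_smul, mul_comm]
    rw [h1]
    field_simp
  haveI : F.NeBot := cF_neBot x
  have hcobm : Filter.IsCoboundedUnder (· ≤ ·) F (cQ J v ∘ m) := by
    apply Filter.isCoboundedUnder_le_of_eventually_le F (x := -(K * ‖v‖))
    exact (htm.eventually (hK v)).mono fun p h => (abs_le.1 h).1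
  have hbdm : Filter.IsBoundedUnder (· ≤ ·) F (cQ J v ∘ m) :=
    ⟨K * ‖v‖, Filter.eventually_map.2
      ((htm.eventually (hK v)).mono fun p h => (abs_le.1 h).2)⟩
  have hbdcm : Filter.IsBoundedUnder (· ≤ ·) F (fun p => c * (cQ J v ∘ m) p) :=
    ⟨c * (K * ‖v‖), Filter.eventually_map.2
      ((htm.eventually (hK v)).mono fun p h =>
        mul_le_mul_of_nonneg_left (abs_le.1 h).2 hc.le)⟩
  have hcobcm : Filter.IsCoboundedUnder (· ≤ ·) F (fun p => c * (cQ J v ∘ m) p) := by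
    apply Filter.isCoboundedUnder_le_of_eventually_le F (x := c * (-(K * ‖v‖)))
    exact (htm.eventually (hK v)).mono fun p h =>
      mul_le_mul_of_nonneg_left (abs_le.1 h).1 hc.le
  -- main computation
  have e : (OrderIso.mulLeft₀ c hc : ℝ ≃o ℝ) (Filter.limsup (cQ J v ∘ m) F)
      = Filter.limsup (fun p => (OrderIso.mulLeft₀ c hc : ℝ ≃o ℝ) ((cQ J v ∘ m) p)) F :=
    OrderIso.limsup_apply _ hbdm hcobm (by simpa using hbdcm) (by simpa using hcobcm)
  have hlimm : Filter.limsup (cQ J v ∘ m) F = Filter.limsup (cQ J v) F := by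
    have : Filter.limsup (cQ J v) (Filter.map m F) = Filter.limsup (cQ J v ∘ m) F := by
      rw [Filter.limsup, Filter.limsup, Filter.map_map]
    rw [← this, hmapF]
  calc clarkeDeriv J x (c • v) = Filter.limsup (cQ J (c • v)) F := rfl
    _ = Filter.limsup (fun p => c * (cQ J v ∘ m) p) F := Filter.limsup_congr hfun
    _ = c * Filter.limsup (cQ J v ∘ m) F := by
        have := e
        simp only [OrderIso.mulLeft₀_apply] at this
        exact this.symm
    _ = c * clarkeDeriv J x v := by rw [hlimm]; rfl

/-- The Clarke derivative majorizes `-clarkeDeriv` of the opposite direction. -/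
lemma clarkeDeriv_neg_le {J : X → ℝ} (hJ : LocallyLipschitz J) (x v : X) :
    0 ≤ clarkeDeriv J x v + clarkeDeriv J x (-v) := by
  have h := clarkeDeriv_add_le hJ x v (-v)
  rw [add_neg_cancel, clarkeDeriv_zero] at h
  linarith

/-- Key attainment lemma: the Clarke derivative in a given direction is attained
by some element of the Clarke gradient. -/
lemma exists_clarkeGrad_eq {J : X → ℝ} (hJ : LocallyLipschitz J) (x d : X) :
    ∃ ξ ∈ clarkeGrad J x, ξ d = clarkeDeriv J x d := by
  obtain ⟨K, hK0, hK⟩ := exists_eventual_bound hJ x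
  have hub : ∀ v : X, clarkeDeriv J x v ≤ K * ‖v‖ := fun v => clarkeDeriv_le_bound (hK v)
  -- main construction for d ≠ 0
  have main : ∀ d : X, d ≠ 0 → ∃ ξ ∈ clarkeGrad J x, ξ d = clarkeDeriv J x d := by
    intro d hd
    set N : X → ℝ := clarkeDeriv J x with hN
    have N_hom : ∀ c : ℝ, 0 < c → ∀ y : X, N (c • y) = c * N y := fun c hc y =>
      clarkeDeriv_smul hJ x hc y
    have N_add : ∀ y z : X, N (y + z) ≤ N y + N z := fun y z =>
      clarkeDeriv_add_le hJ x y z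
    set f₀ : X →ₗ.[ℝ] ℝ := LinearPMap.mkSpanSingleton d (N d) hd with hf₀
    have hf : ∀ z : f₀.domain, f₀ z ≤ N z := by
      rintro ⟨z, hz⟩
      have hz' : z ∈ Submodule.span ℝ {d} := hz
      obtain ⟨c, rfl⟩ := Submodule.mem_span_singleton.1 hz'
      have happ : f₀ ⟨c • d, hz⟩ = c • N d := by
        apply LinearPMap.mkSpanSingleton'_apply
      rw [happ]
      simp only [smul_eq_mul]
      rcases lt_trichotomy c 0 with hc | hc | hc
      · have h1 : N (c • d) = (-c) * N (-d) := by
          have : c • d = (-c) • (-d) := by simp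
          rw [this, N_hom (-c) (by linarith) (-d)]
        have h2 : 0 ≤ N d + N (-d) := clarkeDeriv_neg_le hJ x d
        rw [h1]; nlinarith
      · subst hc
        simp only [zero_mul, zero_smul]
        rw [show N (0 : X) = 0 from clarkeDeriv_zero x]
      · rw [N_hom c hc d]
    obtain ⟨g, hg1, hg2⟩ := exists_extension_of_le_sublinear f₀ N N_hom N_add hf
    have hgbound : ∀ y : X, ‖g y‖ ≤ K * ‖y‖ := by
      intro y
      rw [Real.norm_eq_abs, abs_le]
      constructor
      · have := (hg2 (-y)).trans (hub (-y))
        simp only [map_neg, norm_neg] at this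
        linarith
      · exact (hg2 y).trans (hub y)
    set ξ : X →L[ℝ] ℝ := g.mkContinuous K hgbound with hξ
    refine ⟨ξ, fun w => ?_, ?_⟩
    · exact hg2 w
    · have hmem : d ∈ f₀.domain := Submodule.mem_span_singleton_self d
      have := hg1 ⟨d, hmem⟩
      have happ : f₀ ⟨d, hmem⟩ = N d := LinearPMap.mkSpanSingleton_apply ℝ ℝ hd (N d)
      rw [happ] at this
      exact this
  rcases eq_or_ne d 0 with rfl | hd
  · rcases subsingleton_or_nontrivial X with hX | hX
    · refine ⟨0, fun w => ?_, ?_⟩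
      · have : w = 0 := Subsingleton.elim _ _
        rw [this, clarkeDeriv_zero]
        simp
      · simp [clarkeDeriv_zero]
    · obtain ⟨d', hd'⟩ := exists_ne (0 : X)
      obtain ⟨ξ, hξ, -⟩ := main d' hd'
      exact ⟨ξ, hξ, by simp [clarkeDeriv_zero]⟩
  · exact main d hd

end ClarkeAux

/-- Theorem 3.4: uniqueness of the first component of solutions to the mixed
variational-hemivariational inequality. -/
theorem uniqueness_first_component
    {V E X : Type*} [NormedAddCommGroup V] [NormedSpace ℝ V] [CompleteSpace V]
    [NormedAddCommGroup E] [NormedSpace ℝ E] [CompleteSpace E]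
    [NormedAddCommGroup X] [NormedSpace ℝ X]
    (hreflV : Function.Surjective (NormedSpace.inclusionInDoubleDual ℝ V))
    (hreflE : Function.Surjective (NormedSpace.inclusionInDoubleDual ℝ E))
    (Λ : Set E) (hΛ : Λ.Nonempty) (hΛc : IsClosed Λ) (hΛconv : Convex ℝ Λ)
    (γ : V →L[ℝ] X) (J : X → ℝ) (hJ : LocallyLipschitz J)
    (b : V →ₗ[ℝ] E →ₗ[ℝ] ℝ) (hb : ∃ M : ℝ, ∀ (v : V) (ρ : E), |b v ρ| ≤ M * ‖v‖ * ‖ρ‖)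
    (A : V → (V →L[ℝ] ℝ)) (f : V →L[ℝ] ℝ)
    (h : V → ℝ) (hh0 : h 0 = 0) (hhpos : ∀ v : V, v ≠ 0 → 0 < h v)
    (hmono : ∀ u v : V, ∀ ξu ∈ clarkeGrad J (γ u), ∀ ξv ∈ clarkeGrad J (γ v),
      h (u - v) ≤ A u (u - v) + ξu (γ (u - v)) - A v (u - v) - ξv (γ (u - v)))
    (u₁ u₂ : V) (lam₁ lam₂ : E) (hlam₁ : lam₁ ∈ Λ) (hlam₂ : lam₂ ∈ Λ)
    (hs₁ : (∀ v : V, f (v - u₁) ≤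
        A u₁ (v - u₁) + b (v - u₁) lam₁ + clarkeDeriv J (γ u₁) (γ v - γ u₁)) ∧
      (∀ ρ ∈ Λ, b u₁ (ρ - lam₁) ≤ 0))
    (hs₂ : (∀ v : V, f (v - u₂) ≤
        A u₂ (v - u₂) + b (v - u₂) lam₂ + clarkeDeriv J (γ u₂) (γ v - γ u₂)) ∧
      (∀ ρ ∈ Λ, b u₂ (ρ - lam₂) ≤ 0)) :
    u₁ = u₂ := by
  by_contra hne
  have hw : u₁ - u₂ ≠ 0 := sub_ne_zero.2 hne
  have hhw : 0 < h (u₁ - u₂) := hhpos _ hw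
  obtain ⟨ξ₁, hξ₁, hξ₁e⟩ := exists_clarkeGrad_eq hJ (γ u₁) (γ u₂ - γ u₁)
  obtain ⟨ξ₂, hξ₂, hξ₂e⟩ := exists_clarkeGrad_eq hJ (γ u₂) (γ u₁ - γ u₂)
  have hm := hmono u₁ u₂ ξ₁ hξ₁ ξ₂ hξ₂
  have h1 := hs₁.1 u₂
  have h2 := hs₂.1 u₁
  have hb1 := hs₁.2 lam₂ hlam₂
  have hb2 := hs₂.2 lam₁ hlam₁
  set D₁ := clarkeDeriv J (γ u₁) (γ u₂ - γ u₁) with hD₁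
  set D₂ := clarkeDeriv J (γ u₂) (γ u₁ - γ u₂) with hD₂
  simp only [map_sub, LinearMap.sub_apply] at hm h1 h2 hb1 hb2 hξ₁e hξ₂e
  linarith
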